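/- Let K be a Poisson field over a field k of characteristic zero, let h ∈ K \ k, and let f(t) = a_l t^l + a_{l+1} t^{l+1} + ··· + a_n t^n be a Laurent polynomial with integer exponents l ≤ n, coefficients a_i ∈ k, and a_l, a_n ≠ 0. Suppose u, v are nonzero elements of K with {u,v} = u·v·f(h), and let d be an integer with 0 ≤ d < n. Then ν(h) ≥ 0 for every nontrivial d-valuation ν on K; that is, h ∈ ^dΓ_0(K). -/

import Mathlib

noncomputable section

open MvPolynomial

/-- The rational function field `k(x,y)`, realized as the fraction field of `k[x,y]`. -/
abbrev Kxy (k : Type) [Field k] : Type := FractionRing (MvPolynomial (Fin 2) k)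

variable (k : Type) [Field k]

/-- The element `x` of `k(x,y)`. -/
def Xe : Kxy k := algebraMap (MvPolynomial (Fin 2) k) (Kxy k) (X 0)

/-- The element `y` of `k(x,y)`. -/
def Ye : Kxy k := algebraMap (MvPolynomial (Fin 2) k) (Kxy k) (X 1)

variable {k}

/-- `D` is the partial derivative `∂/∂x` on `k(x,y)` (the unique extension to `k(x,y)` of the
partial derivative `∂/∂x` on `k[x,y]`, being a derivation killing `y`). -/
def IsDx (D : Derivation k (Kxy k) (Kxy k)) : Prop :=
  D (Xe k) = 1 ∧ D (Ye k) = 0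

/-- `D` is the partial derivative `∂/∂y` on `k(x,y)`. -/
def IsDy (D : Derivation k (Kxy k) (Kxy k)) : Prop :=
  D (Xe k) = 0 ∧ D (Ye k) = 1

/-- The Poisson bracket of `K{f}`: `{g,h} = (g_x h_y - g_y h_x) * f`. -/
def pbr (Dx Dy : Derivation k (Kxy k) (Kxy k)) (f g h : Kxy k) : Kxy k :=
  (Dx g * Dy h - Dy g * Dx h) * f

/-- A Poisson bracket on a commutative `k`-algebra `A`: a `k`-bilinear antisymmetric map which is
a derivation in each argument and satisfies the Jacobi identity.  (Bilinearity and the Leibniz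
rule in the first argument follow from antisymmetry.) -/
structure PoissonBracket (k A : Type) [CommRing k] [CommRing A] [Algebra k A] where
  br : A → A → A
  add_left : ∀ a b c : A, br (a + b) c = br a c + br b c
  smul_left : ∀ (r : k) (a b : A), br (r • a) b = r • br a b
  antisymm : ∀ a b : A, br a b = - br b a
  leibniz : ∀ a b c : A, br a (b * c) = br a b * c + b * br a c
  jacobi : ∀ a b c : A, br (br a b) c + br (br c a) b + br (br b c) a = 0

/-- `φ` is a morphism of Poisson fields from `(k(x,y), B₁)` to `(k(x,y), B₂)`. -/
def IsPoissonHom (B₁ B₂ : Kxy k → Kxy k → Kxy k) (φ : Kxy k →ₐ[k] Kxy k) : Prop :=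
  ∀ a b : Kxy k, φ (B₁ a b) = B₂ (φ a) (φ b)

/-- The Poisson fields `(k(x,y), B₁)` and `(k(x,y), B₂)` are Poisson-isomorphic. -/
def PoissonIso (B₁ B₂ : Kxy k → Kxy k → Kxy k) : Prop :=
  ∃ φ : Kxy k ≃ₐ[k] Kxy k, ∀ a b : Kxy k, φ (B₁ a b) = B₂ (φ a) (φ b)

/-- A discrete valuation on a field extension `K` of `k`, trivial on `k`. -/
structure DVal (k K : Type) [Field k] [Field K] [Algebra k K] where
  v : K → WithTop ℤ
  top_iff : ∀ a : K, v a = ⊤ ↔ a = 0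
  v_mul : ∀ a b : K, v (a * b) = v a + v b
  min_le : ∀ a b : K, min (v a) (v b) ≤ v (a + b)
  const : ∀ c : k, c ≠ 0 → v (algebraMap k K c) = 0

variable {K : Type} [Field K] [Algebra k K]

/-- `ν` is a `w`-valuation for the Poisson bracket `B`:
`ν({a,b}) ≥ ν(a) + ν(b) - w` for all `a b`. -/
def DVal.IsWVal (ν : DVal k K) (B : K → K → K) (w : ℤ) : Prop :=
  ∀ a b : K, ν.v a + ν.v b ≤ ν.v (B a b) + (w : WithTop ℤ)

/-- `ν` is a nontrivial valuation. -/
def DVal.Nontriv (ν : DVal k K) : Prop := ∃ a : K, a ≠ 0 ∧ ν.v a ≠ 0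

/-- `ν` is a non-classical `w`-valuation for `B`: it is a `w`-valuation, and there are nonzero
`a, b` with `ν({a,b}) ≤ ν(a) + ν(b) - w`. -/
def DVal.IsNonClassicalWVal (ν : DVal k K) (B : K → K → K) (w : ℤ) : Prop :=
  ν.IsWVal B w ∧ ∃ a b : K, a ≠ 0 ∧ b ≠ 0 ∧ ν.v (B a b) + (w : WithTop ℤ) ≤ ν.v a + ν.v b

open scoped Classical in
/-- The invariant `^wΓ_v(K)` : elements whose value is `≥ v` under every nontrivial
`w`-valuation; all of `K` if there is no nontrivial `w`-valuation. -/
def Gamma (k K : Type) [Field k] [Field K] [Algebra k K]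
    (B : K → K → K) (w v : ℤ) : Set K :=
  if ∃ ν : DVal k K, ν.Nontriv ∧ ν.IsWVal B w then
    {a : K | ∀ ν : DVal k K, ν.Nontriv → ν.IsWVal B w → (v : WithTop ℤ) ≤ ν.v a}
  else Set.univ

/-- The set of integers `w` such that there is a non-classical `w`-valuation `ν` on `K` with
`F^ν_0(K) ∩ ^nΓ_0(K) = k`.  The `n`-valuation height `vht_n(K)` is `2` plus the infimum of
this set. -/
def vhtSet (k K : Type) [Field k] [Field K] [Algebra k K]
    (B : K → K → K) (n : ℤ) : Set ℤ :=
  {w : ℤ | ∃ ν : DVal k K, ν.IsNonClassicalWVal B w ∧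
    ({a : K | (0 : WithTop ℤ) ≤ ν.v a} ∩ Gamma k K B n 0 = Set.range (algebraMap k K))}

/-- The set of total degrees of polynomial flags `g ∈ k[x,y]` with `K{f} ≅ K{g}`.
The flag height `fht(K{f})` is the infimum of this set (in `ℕ∞`, so `⊤` if empty). -/
def fhtSet (Dx Dy : Derivation k (Kxy k) (Kxy k)) (f : Kxy k) : Set ℕ∞ :=
  {d : ℕ∞ | ∃ g : MvPolynomial (Fin 2) k, (g.totalDegree : ℕ∞) = d ∧
    PoissonIso (pbr Dx Dy f) (pbr Dx Dy (algebraMap (MvPolynomial (Fin 2) k) (Kxy k) g))}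

/-- `K{f}` is height cohereditary: `fht(K{f}) ≤ fht(K{g})` whenever there is an (automatically
injective) Poisson morphism `K{f} → K{g}`. -/
def HeightCohereditary (Dx Dy : Derivation k (Kxy k) (Kxy k)) (f : Kxy k) : Prop :=
  ∀ g : Kxy k,
    (∃ φ : Kxy k →ₐ[k] Kxy k, IsPoissonHom (pbr Dx Dy f) (pbr Dx Dy g) φ) →
    sInf (fhtSet Dx Dy f) ≤ sInf (fhtSet Dx Dy g)



section DValHelpers

variable {k K : Type} [Field k] [Field K] [Algebra k K]

lemma DVal.v_one (ν : DVal k K) : ν.v 1 = 0 := by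
  have := ν.const 1 one_ne_zero
  simpa using this

lemma DVal.v_ne_top (ν : DVal k K) {x : K} (hx : x ≠ 0) : ν.v x ≠ ⊤ := fun h =>
  hx ((ν.top_iff x).1 h)

lemma DVal.v_neg (ν : DVal k K) (x : K) : ν.v (-x) = ν.v x := by
  have h2 : ν.v ((-1 : K) * (-1)) = ν.v (-1 : K) + ν.v (-1 : K) := ν.v_mul _ _
  rw [neg_mul_neg, one_mul, ν.v_one] at h2
  have hne : ν.v (-1 : K) ≠ ⊤ := ν.v_ne_top (by norm_num)
  obtain ⟨c, hc⟩ := WithTop.ne_top_iff_exists.1 hne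
  have hc0 : c = 0 := by
    rw [← hc] at h2
    have : (0 : ℤ) = c + c := by exact_mod_cast h2
    omega
  have h1 : ν.v (-1 : K) = 0 := by rw [← hc, hc0]; rfl
  rw [show (-x : K) = (-1) * x by ring, ν.v_mul, h1, zero_add]

lemma DVal.v_add_eq (ν : DVal k K) {x y : K} (h : ν.v x < ν.v y) :
    ν.v (x + y) = ν.v x := by
  refine le_antisymm ?_ ?_
  · by_contra hc
    push_neg at hc
    have h2 : (x + y) + (-y) = x := by ring
    have h3 : min (ν.v (x + y)) (ν.v (-y)) ≤ ν.v ((x + y) + (-y)) := ν.min_le _ _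
    rw [ν.v_neg, h2] at h3
    exact (lt_min hc h).not_ge h3
  · have := ν.min_le x y
    rwa [min_eq_left h.le] at this

lemma DVal.lt_v_sum (ν : DVal k K) {c : WithTop ℤ} (hc : c ≠ ⊤)
    {s : Finset ℤ} {f : ℤ → K} (hf : ∀ i ∈ s, c < ν.v (f i)) :
    c < ν.v (∑ i ∈ s, f i) := by
  classical
  induction s using Finset.induction_on with
  | empty =>
    rw [Finset.sum_empty, (ν.top_iff 0).2 rfl]
    exact lt_top_iff_ne_top.2 hc
  | @insert a s ha ih =>
    rw [Finset.sum_insert ha]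
    have h1 : c < ν.v (f a) := hf a (Finset.mem_insert_self a s)
    have h2 : c < ν.v (∑ i ∈ s, f i) :=
      ih (fun i hi => hf i (Finset.mem_insert_of_mem hi))
    calc c < min (ν.v (f a)) (ν.v (∑ i ∈ s, f i)) := lt_min h1 h2
    _ ≤ _ := ν.min_le _ _

lemma DVal.v_pow (ν : DVal k K) {h : K} (m : ℤ) (hm : ν.v h = (m : WithTop ℤ)) (j : ℕ) :
    ν.v (h ^ j) = ((j * m : ℤ) : WithTop ℤ) := by
  induction j with
  | zero => simpa using ν.v_one
  | succ j ih =>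
    rw [pow_succ, ν.v_mul, ih, hm, ← WithTop.coe_add]
    congr 1
    push_cast
    ring

lemma DVal.v_zpow (ν : DVal k K) {h : K} (h0 : h ≠ 0) (m : ℤ)
    (hm : ν.v h = (m : WithTop ℤ)) (i : ℤ) :
    ν.v (h ^ i) = ((i * m : ℤ) : WithTop ℤ) := by
  rcases i with j | j
  · rw [Int.ofNat_eq_coe, zpow_natCast]
    simpa using ν.v_pow m hm j
  · have key : h ^ (Int.negSucc j) * h ^ ((j : ℤ) + 1) = 1 := by
      rw [← zpow_add₀ h0, show Int.negSucc j + ((j : ℤ) + 1) = 0 by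
        rw [Int.negSucc_eq]; ring, zpow_zero]
    have hnat : h ^ ((j : ℤ) + 1) = h ^ (j + 1 : ℕ) := by
      rw [← zpow_natCast h (j + 1)]
      norm_num
    have h1 := ν.v_mul (h ^ (Int.negSucc j)) (h ^ ((j : ℤ) + 1))
    rw [key, ν.v_one, hnat, ν.v_pow m hm] at h1
    have hne : ν.v (h ^ (Int.negSucc j)) ≠ ⊤ := ν.v_ne_top (zpow_ne_zero _ h0)
    obtain ⟨c, hc⟩ := WithTop.ne_top_iff_exists.1 hne
    rw [← hc] at h1 ⊢
    have h2 : (0 : ℤ) = c + (j + 1 : ℕ) * m := by exact_mod_cast h1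
    have h3 : (Int.negSucc j) * m = c := by
      rw [Int.negSucc_eq]
      push_cast at h2 ⊢
      linarith
    rw [h3]

end DValHelpers

/-- Let `K` be a Poisson field over `k`, `h ∈ K \ k`, and
`f(t) = a_l t^l + ⋯ + a_n t^n` a Laurent polynomial with `a_l, a_n ≠ 0`.  If
`{u,v} = u·v·f(h)` for some nonzero `u, v ∈ K` and `0 ≤ d < n`, then `ν(h) ≥ 0` for every
nontrivial `d`-valuation `ν` on `K`; that is, `h ∈ ^dΓ_0(K)`. -/
theorem statement5 (k K : Type) [Field k] [CharZero k] [Field K] [Algebra k K]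
    (B : PoissonBracket k K)
    (h : K) (hh : h ∉ Set.range (algebraMap k K))
    (l n : ℤ) (hln : l ≤ n) (a : ℤ → k) (hal : a l ≠ 0) (han : a n ≠ 0)
    (u v : K) (hu : u ≠ 0) (hv : v ≠ 0)
    (huv : B.br u v = u * v * ∑ i ∈ Finset.Icc l n, algebraMap k K (a i) * h ^ i)
    (d : ℤ) (hd0 : 0 ≤ d) (hdn : d < n) :
    (∀ ν : DVal k K, ν.Nontriv → ν.IsWVal B.br d → (0 : WithTop ℤ) ≤ ν.v h) ∧
    h ∈ Gamma k K B.br d 0 := by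
  have h0 : h ≠ 0 := fun he => hh ⟨0, by simp [he]⟩
  have main : ∀ ν : DVal k K, ν.Nontriv → ν.IsWVal B.br d → (0 : WithTop ℤ) ≤ ν.v h := by
    intro ν _ hw
    by_contra hlt
    push_neg at hlt
    obtain ⟨m, hm⟩ := WithTop.ne_top_iff_exists.1 (ν.v_ne_top h0)
    rw [← hm] at hlt
    have hm0 : m < 0 := by exact_mod_cast hlt
    set F := ∑ i ∈ Finset.Icc l n, algebraMap k K (a i) * h ^ i with hF
    have hnmem : n ∈ Finset.Icc l n := Finset.mem_Icc.2 ⟨hln, le_refl n⟩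
    have hsplit : F = algebraMap k K (a n) * h ^ n
        + ∑ i ∈ (Finset.Icc l n).erase n, algebraMap k K (a i) * h ^ i :=
      (Finset.add_sum_erase _ _ hnmem).symm
    have hvn : ν.v (algebraMap k K (a n) * h ^ n) = ((n * m : ℤ) : WithTop ℤ) := by
      rw [ν.v_mul, ν.const _ han, ν.v_zpow h0 m hm.symm n, zero_add]
    have hrest : ((n * m : ℤ) : WithTop ℤ)
        < ν.v (∑ i ∈ (Finset.Icc l n).erase n, algebraMap k K (a i) * h ^ i) := by
      apply ν.lt_v_sum WithTop.coe_ne_top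
      intro i hi
      rcases eq_or_ne (a i) 0 with hai | hai
      · rw [hai, map_zero, zero_mul, (ν.top_iff 0).2 rfl]
        exact WithTop.coe_lt_top _
      · have hi' : i < n :=
          lt_of_le_of_ne (Finset.mem_Icc.1 (Finset.mem_of_mem_erase hi)).2
            (Finset.ne_of_mem_erase hi)
        rw [ν.v_mul, ν.const _ hai, ν.v_zpow h0 m hm.symm i, zero_add]
        exact_mod_cast mul_lt_mul_of_neg_right hi' hm0
    have hvF : ν.v F = ((n * m : ℤ) : WithTop ℤ) := by
      rw [hsplit, ν.v_add_eq (by rw [hvn]; exact hrest), hvn]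
    obtain ⟨p, hp⟩ := WithTop.ne_top_iff_exists.1 (ν.v_ne_top hu)
    obtain ⟨q, hq⟩ := WithTop.ne_top_iff_exists.1 (ν.v_ne_top hv)
    have hkey := hw u v
    rw [huv, ν.v_mul, ν.v_mul, hvF, ← hp, ← hq] at hkey
    have hineq : (p + q : ℤ) ≤ p + q + n * m + d := by exact_mod_cast hkey
    have hnm : n * (m + 1) ≤ 0 :=
      mul_nonpos_of_nonneg_of_nonpos (by omega) (by omega)
    nlinarith
  refine ⟨main, ?_⟩
  unfold Gamma
  split_ifs with hex
  · exact fun ν hnt hw => main ν hnt hw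
  · exact Set.mem_univ h

end
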